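/- Let A be a self-adjoint endomorphism of a finite-dimensional real inner product space and let c ≥ 0. If every eigenvalue of A is ≥ c, then for every pair of orthonormal vectors X, Y one has ⟨AX,X⟩⟨AY,Y⟩ − ⟨AX,Y⟩² ≥ c². Moreover, if every eigenvalue of A is strictly greater than c, then the inequality is strict. -/

import Mathlib

/-!
STATEMENT 15 (de Lima, inequality (2.5)): Let A be a self-adjoint endomorphism
of a finite-dimensional real inner product space and let c ≥ 0.  If every
eigenvalue of A is ≥ c, then for every pair of orthonormal vectors X, Y one has
⟨AX,X⟩⟨AY,Y⟩ − ⟨AX,Y⟩² ≥ c² (this quantity is the determinant of the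
compression of A to the plane spanned by X and Y).  Moreover, if every
eigenvalue of A is strictly greater than c, then the inequality is strict.
-/


lemma key_pos {V : Type*} [NormedAddCommGroup V] [InnerProductSpace ℝ V] [FiniteDimensional ℝ V]
    (A : Module.End ℝ V) (hA : LinearMap.IsSymmetric A) (c : ℝ)
    (h : ∀ i, c ≤ hA.eigenvalues rfl i) (v : V) :
    c * ‖v‖ ^ 2 ≤ (inner ℝ (A v) v : ℝ) := by
  set b := hA.eigenvectorBasis (rfl : Module.finrank ℝ V = Module.finrank ℝ V)
  have h1 : (inner ℝ (A v) v : ℝ) = ∑ i, hA.eigenvalues rfl i * (b.repr v i) ^ 2 := by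
    rw [← b.repr.inner_map_map (A v) v]
    simp only [PiLp.inner_apply, RCLike.inner_apply, conj_trivial]
    refine Finset.sum_congr rfl fun i _ => ?_
    rw [hA.eigenvectorBasis_apply_self_apply]
    simp only [RCLike.ofReal_real_eq_id, id_eq]
    ring
  have h2 : ‖v‖ ^ 2 = ∑ i, (b.repr v i) ^ 2 := by
    rw [← b.repr.norm_map v, EuclideanSpace.norm_eq,
      Real.sq_sqrt (Finset.sum_nonneg fun i _ => sq_nonneg _)]
    simp [sq_abs]
  rw [h1, h2, Finset.mul_sum]
  exact Finset.sum_le_sum fun i _ => mul_le_mul_of_nonneg_right (h i) (sq_nonneg _)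

lemma key_ineq {V : Type*} [NormedAddCommGroup V] [InnerProductSpace ℝ V] [FiniteDimensional ℝ V]
    (A : Module.End ℝ V) (hA : LinearMap.IsSymmetric A) (c : ℝ) (hc : 0 ≤ c)
    (h : ∀ i, c ≤ hA.eigenvalues rfl i)
    (X Y : V) (hX : ‖X‖ = 1) (hY : ‖Y‖ = 1) (hXY : (inner ℝ X Y : ℝ) = 0) :
    c ^ 2 ≤ (inner ℝ (A X) X : ℝ) * (inner ℝ (A Y) Y : ℝ) - (inner ℝ (A X) Y : ℝ) ^ 2 := by
  have hpos := key_pos A hA c h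
  set a := (inner ℝ (A X) X : ℝ)
  set d := (inner ℝ (A Y) Y : ℝ)
  set t := (inner ℝ (A X) Y : ℝ)
  have ha : c ≤ a := by have := hpos X; rwa [hX, one_pow, mul_one] at this
  have hd : c ≤ d := by have := hpos Y; rwa [hY, one_pow, mul_one] at this
  -- Cauchy–Schwarz for the semidefinite form v ↦ ⟨(A - c)v, v⟩
  have hYX : (inner ℝ Y X : ℝ) = 0 := by rw [real_inner_comm]; exact hXY
  have hAYX : (inner ℝ (A Y) X : ℝ) = t := by
    rw [hA Y X, real_inner_comm]
  have expand : ∀ s : ℝ, (d - c) * s ^ 2 + 2 * t * s + (a - c) =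
      (inner ℝ (A (X + s • Y)) (X + s • Y) : ℝ) - c * ‖X + s • Y‖ ^ 2 := by
    intro s
    have hn : ‖X + s • Y‖ ^ 2 = 1 + s ^ 2 := by
      rw [← real_inner_self_eq_norm_sq]
      simp only [inner_add_add_self, inner_smul_left, inner_smul_right, real_inner_self_eq_norm_sq,
        hX, hY, hXY, hYX, conj_trivial]
      ring
    simp only [map_add, map_smul, inner_add_left, inner_add_right, real_inner_smul_left,
      real_inner_smul_right, hn, hAYX]
    ring
  have hdisc : discrim (d - c) (2 * t) (a - c) ≤ 0 := by
    apply discrim_le_zero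
    intro s
    have h3 := hpos (X + s • Y)
    have h4 := expand s
    nlinarith [h3, h4]
  rw [discrim] at hdisc
  nlinarith [mul_nonneg (sub_nonneg.2 ha) (sub_nonneg.2 hd), sq_nonneg t]

theorem det_compression_of_eigenvalue_bound
    {V : Type*} [NormedAddCommGroup V] [InnerProductSpace ℝ V] [FiniteDimensional ℝ V]
    (A : Module.End ℝ V) (hA : LinearMap.IsSymmetric A)
    (c : ℝ) (hc : 0 ≤ c)
    (X Y : V) (hX : ‖X‖ = 1) (hY : ‖Y‖ = 1) (hXY : (inner ℝ X Y : ℝ) = 0) :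
    ((∀ μ : ℝ, Module.End.HasEigenvalue A μ → c ≤ μ) →
      c ^ 2 ≤ (inner ℝ (A X) X : ℝ) * (inner ℝ (A Y) Y : ℝ) - (inner ℝ (A X) Y : ℝ) ^ 2) ∧
    ((∀ μ : ℝ, Module.End.HasEigenvalue A μ → c < μ) →
      c ^ 2 < (inner ℝ (A X) X : ℝ) * (inner ℝ (A Y) Y : ℝ) - (inner ℝ (A X) Y : ℝ) ^ 2) := by
  have hX0 : X ≠ 0 := by intro h; rw [h, norm_zero] at hX; norm_num at hX
  haveI : Nontrivial V := ⟨X, 0, hX0⟩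
  have hdim : 0 < Module.finrank ℝ V := Module.finrank_pos
  constructor
  · intro hμ
    exact key_ineq A hA c hc (fun i => hμ _ (hA.hasEigenvalue_eigenvalues rfl i)) X Y hX hY hXY
  · intro hμ
    haveI : Nonempty (Fin (Module.finrank ℝ V)) := ⟨⟨0, hdim⟩⟩
    set c' := Finset.univ.inf' Finset.univ_nonempty (hA.eigenvalues rfl)
    have hc'le : ∀ i, c' ≤ hA.eigenvalues rfl i := fun i =>
      Finset.inf'_le _ (Finset.mem_univ i)
    have hcc' : c < c' := by
      obtain ⟨i, _, hi⟩ := Finset.exists_mem_eq_inf' Finset.univ_nonempty (hA.eigenvalues rfl)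
      show c < Finset.univ.inf' Finset.univ_nonempty (hA.eigenvalues rfl)
      rw [hi]
      exact hμ _ (hA.hasEigenvalue_eigenvalues rfl i)
    have h1 := key_ineq A hA c' (le_of_lt (lt_of_le_of_lt hc hcc')) hc'le X Y hX hY hXY
    have : c ^ 2 < c' ^ 2 := by nlinarith
    linarith
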